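/- Let P be a finite connected poset with at least two points, Q a finite poset of height one (flat), and f : E(P) → Q an order homomorphism on the subposet of extremal points of P. For x ∈ P define α(x) = f[L(P) ∩ ↓x] and β(x) = f[U(P) ∩ ↑x]. If for all x with α(x) ∩ β(x) = ∅ one has (|α(x)| ≥ 2 ⟹ |β(x)| = 1) and (|β(x)| ≥ 2 ⟹ |α(x)| = 1), then there exists an order homomorphism g : P → Q extending f, i.e., with g restricted to E(P) equal to f. -/
import Mathlib


/-- The poset is connected: any two points are joined by a walk in the
comparability graph (equivalently, in a finite poset, by a fence). -/
def ConnectedPoset (α : Type*) [PartialOrder α] : Prop :=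
  ∀ a b : α, Relation.ReflTransGen (fun u v : α => u ≤ v ∨ v ≤ u) a b

/-- A poset is flat iff it has height one: every point is extremal and there
is at least one strict comparability. -/
def IsFlatPoset (β : Type*) [PartialOrder β] : Prop :=
  (∀ z : β, IsMin z ∨ IsMax z) ∧ ∃ u v : β, u < v

/-- The set of extremal points of a poset. -/
def EP (α : Type*) [PartialOrder α] : Set α := {z | IsMin z ∨ IsMax z}

section Aux
variable {α β : Type*} [PartialOrder α] [PartialOrder β]

def Aset (f : EP α → β) (x : α) : Set β :=
  f '' {e : EP α | IsMin (e : α) ∧ (e : α) ≤ x}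

def Bset (f : EP α → β) (x : α) : Set β :=
  f '' {e : EP α | IsMax (e : α) ∧ x ≤ (e : α)}

lemma Aset_nonempty [Finite α] (f : EP α → β) (x : α) : (Aset f x).Nonempty := by
  have : WellFoundedLT α := Finite.to_wellFoundedLT
  obtain ⟨m, hm, hmin⟩ := this.wf.has_min {z | z ≤ x} ⟨x, le_refl x⟩
  have hm' : IsMin m := by
    intro w hw
    rcases hw.lt_or_eq with h | h
    · exact absurd h (hmin w (hw.trans hm))
    · exact h.ge
  exact ⟨f ⟨m, Or.inl hm'⟩, ⟨m, Or.inl hm'⟩, ⟨hm', hm⟩, rfl⟩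

lemma Bset_nonempty [Finite α] (f : EP α → β) (x : α) : (Bset f x).Nonempty := by
  have : WellFoundedGT α := Finite.to_wellFoundedGT
  obtain ⟨m, hm, hmax⟩ := this.wf.has_min {z | x ≤ z} ⟨x, le_refl x⟩
  have hm' : IsMax m := by
    intro w hw
    rcases hw.lt_or_eq with h | h
    · exact absurd h (hmax w (le_trans hm hw))
    · exact h.ge
  exact ⟨f ⟨m, Or.inr hm'⟩, ⟨m, Or.inr hm'⟩, ⟨hm', hm⟩, rfl⟩

lemma Aset_mono (f : EP α → β) {x y : α} (hxy : x ≤ y) : Aset f x ⊆ Aset f y := by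
  rintro b ⟨e, ⟨he1, he2⟩, rfl⟩
  exact ⟨e, ⟨he1, he2.trans hxy⟩, rfl⟩

lemma Bset_anti (f : EP α → β) {x y : α} (hxy : x ≤ y) : Bset f y ⊆ Bset f x := by
  rintro b ⟨e, ⟨he1, he2⟩, rfl⟩
  exact ⟨e, ⟨he1, hxy.trans he2⟩, rfl⟩

lemma Aset_le_Bset (f : EP α → β) (hf : Monotone f) {x y : α} (hxy : x ≤ y)
    {a b : β} (ha : a ∈ Aset f x) (hb : b ∈ Bset f y) : a ≤ b := by
  obtain ⟨l, ⟨hl1, hl2⟩, rfl⟩ := ha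
  obtain ⟨u, ⟨hu1, hu2⟩, rfl⟩ := hb
  exact hf (Subtype.coe_le_coe.mp ((hl2.trans hxy).trans hu2))

lemma Bset_isMax (f : EP α → β) {x : α} (hmax : IsMax x) :
    Bset f x = {f ⟨x, Or.inr hmax⟩} := by
  ext b
  constructor
  · rintro ⟨u, ⟨hu1, hu2⟩, rfl⟩
    have hux : u = (⟨x, Or.inr hmax⟩ : EP α) := Subtype.ext (le_antisymm (hmax hu2) hu2)
    simp [hux]
  · rintro rfl
    exact ⟨⟨x, Or.inr hmax⟩, ⟨hmax, le_refl x⟩, rfl⟩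

lemma Aset_isMin (f : EP α → β) {x : α} (hmin : IsMin x) :
    Aset f x = {f ⟨x, Or.inl hmin⟩} := by
  ext b
  constructor
  · rintro ⟨u, ⟨hu1, hu2⟩, rfl⟩
    have hux : u = (⟨x, Or.inl hmin⟩ : EP α) := Subtype.ext (le_antisymm hu2 (hmin hu2))
    simp [hux]
  · rintro rfl
    exact ⟨⟨x, Or.inl hmin⟩, ⟨hmin, le_refl x⟩, rfl⟩

end Aux

/-- Proposition about extending homomorphisms from `E(P)` to `P`. -/
theorem stmt4 {α β : Type*} [PartialOrder α] [PartialOrder β] [Fintype α] [Fintype β]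
    (hconn : ConnectedPoset α) (htwo : ∃ x y : α, x ≠ y)
    (hflat : IsFlatPoset β)
    (f : EP α → β) (hf : Monotone f)
    (hcond : ∀ x : α,
      (f '' {e : EP α | IsMin (e : α) ∧ (e : α) ≤ x}) ∩
        (f '' {e : EP α | IsMax (e : α) ∧ x ≤ (e : α)}) = ∅ →
      (2 ≤ (f '' {e : EP α | IsMin (e : α) ∧ (e : α) ≤ x}).ncard →
        (f '' {e : EP α | IsMax (e : α) ∧ x ≤ (e : α)}).ncard = 1) ∧
      (2 ≤ (f '' {e : EP α | IsMax (e : α) ∧ x ≤ (e : α)}).ncard →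
        (f '' {e : EP α | IsMin (e : α) ∧ (e : α) ≤ x}).ncard = 1)) :
    ∃ g : α → β, Monotone g ∧ ∀ e : EP α, g (e : α) = f e := by
  classical
  have hcond' : ∀ x : α, Aset f x ∩ Bset f x = ∅ →
      (2 ≤ (Aset f x).ncard → (Bset f x).ncard = 1) ∧
      (2 ≤ (Bset f x).ncard → (Aset f x).ncard = 1) := hcond
  -- if disjoint and in the "then" condition, B is a singleton
  have hB1 : ∀ x : α, Aset f x ∩ Bset f x = ∅ → (IsMax x ∨ 2 ≤ (Aset f x).ncard) →
      ∃ b, Bset f x = {b} := by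
    intro x hdisj hcase
    rcases hcase with hmax | hcard
    · exact ⟨_, Bset_isMax f hmax⟩
    · exact Set.ncard_eq_one.mp ((hcond' x hdisj).1 hcard)
  -- if not in the "then" condition, A is a singleton
  have hA1 : ∀ x : α, ¬(IsMax x ∨ 2 ≤ (Aset f x).ncard) → ∃ a, Aset f x = {a} := by
    intro x h
    push_neg at h
    have h1 : 0 < (Aset f x).ncard := (Set.ncard_pos (Aset f x).toFinite).mpr (Aset_nonempty f x)
    have h2 : (Aset f x).ncard < 2 := h.2
    exact Set.ncard_eq_one.mp (by omega)
  set g : α → β := fun x =>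
    if h : (Aset f x ∩ Bset f x).Nonempty then h.choose
    else if IsMax x ∨ 2 ≤ (Aset f x).ncard then (Bset_nonempty f x).choose
    else (Aset_nonempty f x).choose with hg
  have hg_inter : ∀ x (h : (Aset f x ∩ Bset f x).Nonempty),
      g x ∈ Aset f x ∧ g x ∈ Bset f x := by
    intro x h
    have : g x = h.choose := by simp [hg, dif_pos h]
    rw [this]; exact h.choose_spec
  have hg_then : ∀ x, ¬(Aset f x ∩ Bset f x).Nonempty → (IsMax x ∨ 2 ≤ (Aset f x).ncard) →
      g x ∈ Bset f x := by
    intro x h1 h2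
    have : g x = (Bset_nonempty f x).choose := by simp [hg, dif_neg h1, if_pos h2]
    rw [this]; exact (Bset_nonempty f x).choose_spec
  have hg_else : ∀ x, ¬(Aset f x ∩ Bset f x).Nonempty → ¬(IsMax x ∨ 2 ≤ (Aset f x).ncard) →
      g x ∈ Aset f x := by
    intro x h1 h2
    have : g x = (Aset_nonempty f x).choose := by simp [hg, dif_neg h1, if_neg h2]
    rw [this]; exact (Aset_nonempty f x).choose_spec
  refine ⟨g, ?_, ?_⟩
  · -- monotone
    intro x y hxy
    by_cases h1x : (Aset f x ∩ Bset f x).Nonempty <;>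
      by_cases h1y : (Aset f y ∩ Bset f y).Nonempty
    · -- both intersections nonempty
      exact Aset_le_Bset f hf hxy (hg_inter x h1x).1 (hg_inter y h1y).2
    · -- x nonempty, y disjoint
      by_cases h2y : IsMax y ∨ 2 ≤ (Aset f y).ncard
      · exact Aset_le_Bset f hf hxy (hg_inter x h1x).1 (hg_then y h1y h2y)
      · obtain ⟨a, hay⟩ := hA1 y h2y
        have h1 : g x ∈ Aset f y := Aset_mono f hxy (hg_inter x h1x).1
        have h2 : g y ∈ Aset f y := hg_else y h1y h2y
        rw [hay] at h1 h2
        simp only [Set.mem_singleton_iff] at h1 h2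
        rw [h1, h2]
    · -- x disjoint, y nonempty
      by_cases h2x : IsMax x ∨ 2 ≤ (Aset f x).ncard
      · obtain ⟨b, hbx⟩ := hB1 x (Set.not_nonempty_iff_eq_empty.mp h1x) h2x
        have h1 : g y ∈ Bset f x := Bset_anti f hxy (hg_inter y h1y).2
        have h2 : g x ∈ Bset f x := hg_then x h1x h2x
        rw [hbx] at h1 h2
        simp only [Set.mem_singleton_iff] at h1 h2
        rw [h1, h2]
      · exact Aset_le_Bset f hf hxy (hg_else x h1x h2x) (hg_inter y h1y).2
    · -- both disjoint
      by_cases h2x : IsMax x ∨ 2 ≤ (Aset f x).ncard <;>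
        by_cases h2y : IsMax y ∨ 2 ≤ (Aset f y).ncard
      · -- both then: B y ⊆ B x = {b}
        obtain ⟨b, hbx⟩ := hB1 x (Set.not_nonempty_iff_eq_empty.mp h1x) h2x
        have h1 : g y ∈ Bset f x := Bset_anti f hxy (hg_then y h1y h2y)
        have h2 : g x ∈ Bset f x := hg_then x h1x h2x
        rw [hbx] at h1 h2
        simp only [Set.mem_singleton_iff] at h1 h2
        rw [h1, h2]
      · -- x then, y else: impossible
        exfalso
        rcases h2x with hmax | hcard
        · have hyx : y = x := le_antisymm (hmax hxy) hxy
          rw [hyx] at h2y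
          exact h2y (Or.inl hmax)
        · obtain ⟨a, hay⟩ := hA1 y h2y
          have hsub : Aset f x ⊆ Aset f y := Aset_mono f hxy
          rw [hay] at hsub
          have : (Aset f x).ncard ≤ ({a} : Set β).ncard :=
            Set.ncard_le_ncard hsub (Set.finite_singleton a)
          rw [Set.ncard_singleton] at this
          omega
      · -- x else, y then
        exact Aset_le_Bset f hf hxy (hg_else x h1x h2x) (hg_then y h1y h2y)
      · -- both else: A x ⊆ A y = {a}
        obtain ⟨a, hay⟩ := hA1 y h2y
        have h1 : g x ∈ Aset f y := Aset_mono f hxy (hg_else x h1x h2x)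
        have h2 : g y ∈ Aset f y := hg_else y h1y h2y
        rw [hay] at h1 h2
        simp only [Set.mem_singleton_iff] at h1 h2
        rw [h1, h2]
  · -- extension
    intro e
    rcases e.2 with hmin | hmax
    · have hAe : Aset f (e : α) = {f ⟨(e : α), Or.inl hmin⟩} := Aset_isMin f hmin
      have hfe : f ⟨(e : α), Or.inl hmin⟩ = f e := by congr 1
      by_cases h1 : (Aset f (e : α) ∩ Bset f (e : α)).Nonempty
      · have := (hg_inter _ h1).1
        rw [hAe] at this
        simpa [hfe] using this
      · have h2 : ¬(IsMax (e : α) ∨ 2 ≤ (Aset f (e : α)).ncard) := by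
          rintro (hemax | hcard)
          · exact h1 ⟨f ⟨(e : α), Or.inl hmin⟩, by rw [hAe]; exact rfl,
              by rw [Bset_isMax f hemax]; exact rfl⟩
          · rw [hAe, Set.ncard_singleton] at hcard; omega
        have := hg_else _ h1 h2
        rw [hAe] at this
        simpa [hfe] using this
    · have hBe : Bset f (e : α) = {f ⟨(e : α), Or.inr hmax⟩} := Bset_isMax f hmax
      have hfe : f ⟨(e : α), Or.inr hmax⟩ = f e := by congr 1
      by_cases h1 : (Aset f (e : α) ∩ Bset f (e : α)).Nonempty
      · have := (hg_inter _ h1).2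
        rw [hBe] at this
        simpa [hfe] using this
      · have := hg_then _ h1 (Or.inl hmax)
        rw [hBe] at this
        simpa [hfe] using this
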